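/- Let R be a region in the square lattice admitting at least one domino tiling. Then the forcing number f(R) is bounded below by the minimum maximum excess of R taken over all orderings of the black squares of R. -/

import Mathlib

/-- The closed unit square with lower-left corner `s`, as a subset of `ℝ × ℝ`. -/
def unitSq (s : ℤ × ℤ) : Set (ℝ × ℝ) :=
  Set.Icc (s.1 : ℝ) (s.1 + 1) ×ˢ Set.Icc (s.2 : ℝ) (s.2 + 1)

/-- The union of the closed unit squares of a region `R`. -/
def regionSpace (R : Finset (ℤ × ℤ)) : Set (ℝ × ℝ) := ⋃ s ∈ R, unitSq s

/-- The embedding of a lattice point into the plane. -/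
def embPt (x : ℤ × ℤ) : ℝ × ℝ := ((x.1 : ℝ), (x.2 : ℝ))

/-- The four corners of the unit square with lower-left corner `s`. -/
def sqCorners (s : ℤ × ℤ) : Set (ℤ × ℤ) :=
  {s, (s.1 + 1, s.2), (s.1, s.2 + 1), (s.1 + 1, s.2 + 1)}

/-- `V R` : the lattice points that are corners of squares of `R`. -/
def V (R : Finset (ℤ × ℤ)) : Set (ℤ × ℤ) := {x | ∃ s ∈ R, x ∈ sqCorners s}

/-- `bdry R` : lattice points lying on the topological boundary of the region. -/
def bdry (R : Finset (ℤ × ℤ)) : Set (ℤ × ℤ) := {x | embPt x ∈ frontier (regionSpace R)}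

/-- The square with lower-left corner `s` is white when `s.1 + s.2` is even. -/
def White (s : ℤ × ℤ) : Prop := Even (s.1 + s.2)

/-- A domino: a pair of unit squares sharing a side. -/
def IsDomino (d : Finset (ℤ × ℤ)) : Prop :=
  ∃ s t : ℤ × ℤ, d = {s, t} ∧ (t - s = (1, 0) ∨ t - s = (0, 1))

/-- A domino tiling of `R` : a partition of the squares of `R` into dominoes. -/
def IsDominoTiling (R : Finset (ℤ × ℤ)) (T : Finset (Finset (ℤ × ℤ))) : Prop :=
  (∀ d ∈ T, IsDomino d ∧ ∀ s ∈ d, s ∈ R) ∧ ∀ s ∈ R, ∃! d, d ∈ T ∧ s ∈ d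

/-- The four unit steps in the square lattice. -/
def unitSteps : Set (ℤ × ℤ) := {(1, 0), (-1, 0), (0, 1), (0, -1)}

/-- A directed lattice edge of `R`. -/
def DirectedEdge (R : Finset (ℤ × ℤ)) (x y : ℤ × ℤ) : Prop :=
  x ∈ V R ∧ y ∈ V R ∧ y - x ∈ unitSteps ∧
    segment ℝ (embPt x) (embPt y) ⊆ regionSpace R

/-- A directed lattice edge of `R` lying on the boundary `∂R`. -/
def BoundaryEdge (R : Finset (ℤ × ℤ)) (x y : ℤ × ℤ) : Prop :=
  DirectedEdge R x y ∧ segment ℝ (embPt x) (embPt y) ⊆ frontier (regionSpace R)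

/-- The union of the closed squares of a domino. -/
def dominoSpace (d : Finset (ℤ × ℤ)) : Set (ℝ × ℝ) := ⋃ s ∈ d, unitSq s

/-- The edge `(x, y)` belongs to the tiling `T` : its segment is not contained in the
interior of a domino of `T`. -/
def EdgeInTiling (R : Finset (ℤ × ℤ)) (T : Finset (Finset (ℤ × ℤ))) (x y : ℤ × ℤ) : Prop :=
  DirectedEdge R x y ∧
    ¬ ∃ d ∈ T, segment ℝ (embPt x) (embPt y) ⊆ interior (dominoSpace d)

/-- The unit square adjacent to the directed edge `(x, y)` on its left. -/
def leftSq (x y : ℤ × ℤ) : ℤ × ℤ :=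
  if y = (x.1 + 1, x.2) then (x.1, x.2)
  else if y = (x.1 - 1, x.2) then (x.1 - 1, x.2 - 1)
  else if y = (x.1, x.2 + 1) then (x.1 - 1, x.2)
  else (x.1, x.2 - 1)

/-- `h` is a height function of the tiling `T` of `R`. -/
def IsHeightFunction (R : Finset (ℤ × ℤ)) (T : Finset (Finset (ℤ × ℤ)))
    (h : ℤ × ℤ → ℤ) : Prop :=
  ∀ x y : ℤ × ℤ, EdgeInTiling R T x y → White (leftSq x y) → h x - h y = 1

/-- `S` is a forcing set of the tiling `T` of `R`. -/
def IsForcingSet (R : Finset (ℤ × ℤ)) (T S : Finset (Finset (ℤ × ℤ))) : Prop :=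
  S ⊆ T ∧ ∀ T', IsDominoTiling R T' → S ⊆ T' → T' = T

/-- The forcing number of `R`. -/
noncomputable def forcingNumber (R : Finset (ℤ × ℤ)) : ℕ :=
  sInf {n | ∃ T S, IsDominoTiling R T ∧ IsForcingSet R T S ∧ S.card = n}

/-- The function `α`. -/
def alpha (x y : ℤ × ℤ) : ℤ :=
  if (Even (x.1 - x.2) ∧ y.2 - x.2 ≤ y.1 - x.1) ∨ (¬ Even (x.1 - x.2) ∧ y.1 - x.1 < y.2 - x.2)
  then 2 * max |y.1 - x.1| |y.2 - x.2| + ((y.1 - x.1) - (y.2 - x.2)) % 2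
  else 2 * max |y.1 - x.1| |y.2 - x.2| - ((y.1 - x.1) - (y.2 - x.2)) % 2

/-- The Chebyshev norm on `ℤ × ℤ`. -/
def cheb (v : ℤ × ℤ) : ℤ := max |v.1| |v.2|

/-- A geodesic path in the square lattice. -/
def IsGeodesicPath (n : ℕ) (f : Fin (n + 1) → ℤ × ℤ) : Prop :=
  ∀ i : Fin n, f i.castSucc ≠ f i.succ ∧
    (∃ s : ℤ × ℤ, f i.castSucc ∈ sqCorners s ∧ f i.succ ∈ sqCorners s) ∧
    cheb (f i.succ - f 0) = cheb (f i.castSucc - f 0) + 1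

/-- `x ∼_R y` : some geodesic path from `x` to `y` has all of its points in `V R`. -/
def geoRel (R : Finset (ℤ × ℤ)) (x y : ℤ × ℤ) : Prop :=
  ∃ (n : ℕ) (f : Fin (n + 1) → ℤ × ℤ), IsGeodesicPath n f ∧
    f 0 = x ∧ f (Fin.last n) = y ∧ ∀ i, f i ∈ V R

/-- The black squares of `R`. -/
def blackSquares (R : Finset (ℤ × ℤ)) : Finset (ℤ × ℤ) :=
  R.filter fun s => ¬ Even (s.1 + s.2)

/-- The set of white squares of `R` adjacent to at least one square of `U`. -/
noncomputable def nbhdSq (R U : Finset (ℤ × ℤ)) : Finset (ℤ × ℤ) :=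
  @Finset.filter _ (fun w => Even (w.1 + w.2) ∧ ∃ b ∈ U, w - b ∈ unitSteps)
    (Classical.decPred _) R

/-- The excess `e(U) = |N(U)| - |U|`. -/
noncomputable def excess (R U : Finset (ℤ × ℤ)) : ℤ :=
  ((nbhdSq R U).card : ℤ) - U.card

/-- The maximum excess of an ordering (given as a list) of the black squares. -/
noncomputable def maxExcess (R : Finset (ℤ × ℤ)) (l : List (ℤ × ℤ)) : ℤ :=
  sSup {z : ℤ | ∃ k, 1 ≤ k ∧ k ≤ l.length ∧ z = excess R (l.take k).toFinset}

/-- The minimum maximum excess of `R` over all orderings of its black squares. -/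
noncomputable def minMaxExcess (R : Finset (ℤ × ℤ)) : ℤ :=
  sInf {z : ℤ | ∃ l : List (ℤ × ℤ), l.Nodup ∧ l.toFinset = blackSquares R ∧
    z = maxExcess R l}

/-- The `2n × 2n` square region. -/
noncomputable def squareRegion (n : ℕ) : Finset (ℤ × ℤ) :=
  Finset.Icc ((0 : ℤ), (0 : ℤ)) ((2 * n - 1 : ℤ), (2 * n - 1 : ℤ))

/-- The square of side `2k` centered at `x` (as a set of unit squares). -/
noncomputable def centerSquare (x : ℤ × ℤ) (k : ℕ) : Finset (ℤ × ℤ) :=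
  Finset.Icc ((x.1 - k, x.2 - k) : ℤ × ℤ) ((x.1 + k - 1, x.2 + k - 1) : ℤ × ℤ)

/-- Possible values at `x` of height functions of tilings of `R` normalized at `v₀`. -/
def heightVals (R : Finset (ℤ × ℤ)) (v₀ x : ℤ × ℤ) : Set ℤ :=
  {m | ∃ T h, IsDominoTiling R T ∧ IsHeightFunction R T h ∧ h v₀ = 0 ∧ h x = m}

/-- `c(x)` : the side of the largest square centered at `x` whose removal keeps `R` tileable. -/
noncomputable def maxSquareSide (R : Finset (ℤ × ℤ)) (x : ℤ × ℤ) : ℕ :=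
  sSup {m : ℕ | ∃ k : ℕ, m = 2 * k ∧ centerSquare x k ⊆ R ∧
    ∃ T, IsDominoTiling (R \ centerSquare x k) T}

section Helpers

lemma mem_unitSteps_iff {v : ℤ × ℤ} :
    v ∈ unitSteps ↔ v = (1,0) ∨ v = (-1,0) ∨ v = (0,1) ∨ v = (0,-1) := by
  simp [unitSteps]

lemma unitSteps_neg {v : ℤ × ℤ} (h : v ∈ unitSteps) : -v ∈ unitSteps := by
  rcases mem_unitSteps_iff.1 h with h|h|h|h <;> subst h <;> simp [mem_unitSteps_iff] <;> decide

lemma unitSteps_ne_zero {v : ℤ × ℤ} (h : v ∈ unitSteps) : v ≠ 0 := by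
  rcases mem_unitSteps_iff.1 h with h|h|h|h <;> subst h <;> decide

lemma parity_flip {x y : ℤ × ℤ} (h : x - y ∈ unitSteps) :
    Even (x.1 + x.2) ↔ ¬ Even (y.1 + y.2) := by
  have h1 : x.1 - y.1 = (x - y).1 := rfl
  have h2 : x.2 - y.2 = (x - y).2 := rfl
  rcases mem_unitSteps_iff.1 h with h|h|h|h <;> rw [h] at h1 h2 <;>
    simp only [Int.even_iff] at * <;> omega

lemma isDomino_pair {b w : ℤ × ℤ} (h : w - b ∈ unitSteps) : IsDomino {b, w} := by
  rcases mem_unitSteps_iff.1 h with h|h|h|h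
  · exact ⟨b, w, rfl, Or.inl h⟩
  · refine ⟨w, b, ?_, Or.inl ?_⟩
    · rw [Finset.pair_comm]
    · have : b - w = -(w - b) := by ring
      rw [this, h]; decide
  · exact ⟨b, w, rfl, Or.inr h⟩
  · refine ⟨w, b, ?_, Or.inr ?_⟩
    · rw [Finset.pair_comm]
    · have : b - w = -(w - b) := by ring
      rw [this, h]; decide

def IsMatching (Q : Finset (ℤ × ℤ)) (m : ℤ × ℤ → ℤ × ℤ) : Prop :=
  ∀ s ∈ Q, m s ∈ Q ∧ m (m s) = s ∧ m s - s ∈ unitSteps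

lemma tiling_matching {Q : Finset (ℤ × ℤ)} {T : Finset (Finset (ℤ × ℤ))}
    (hT : IsDominoTiling Q T) :
    ∃ m, IsMatching Q m ∧ ∀ s ∈ Q, ({s, m s} : Finset (ℤ × ℤ)) ∈ T := by
  have key : ∀ s ∈ Q, ∃ t, ({s, t} : Finset (ℤ × ℤ)) ∈ T ∧ t - s ∈ unitSteps ∧ t ∈ Q := by
    intro s hs
    obtain ⟨d, ⟨hdT, hsd⟩, -⟩ := hT.2 s hs
    obtain ⟨a, c, rfl, hac⟩ := (hT.1 d hdT).1
    have hmem := (hT.1 _ hdT).2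
    rcases Finset.mem_insert.1 hsd with rfl | hsd
    · refine ⟨c, hdT, ?_, hmem c (by simp)⟩
      rcases hac with h|h <;> rw [h] <;> simp [mem_unitSteps_iff]
    · rw [Finset.mem_singleton] at hsd; subst hsd
      refine ⟨a, by rwa [Finset.pair_comm], ?_, hmem a (by simp)⟩
      have : a - s = -(s - a) := by ring
      rcases hac with h|h <;> rw [this, h] <;> simp [mem_unitSteps_iff] <;> decide
  choose! m hm1 hm2 hm3 using key
  refine ⟨m, fun s hs => ⟨hm3 s hs, ?_, hm2 s hs⟩, hm1⟩
  · -- involution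
    have hms : m s ∈ Q := hm3 s hs
    have h1 : ({m s, m (m s)} : Finset (ℤ × ℤ)) ∈ T := hm1 _ hms
    have h2 : ({s, m s} : Finset (ℤ × ℤ)) ∈ T := hm1 s hs
    obtain ⟨d, -, huniq⟩ := hT.2 (m s) hms
    have e1 := huniq _ ⟨h1, by simp⟩
    have e2 := huniq _ ⟨h2, by simp⟩
    have e : ({m s, m (m s)} : Finset (ℤ × ℤ)) = {s, m s} := e1.trans e2.symm
    have hmm : m (m s) ∈ ({s, m s} : Finset (ℤ × ℤ)) := by
      rw [← e]; simp
    rcases Finset.mem_insert.1 hmm with h | h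
    · exact h
    · rw [Finset.mem_singleton] at h
      have h0 : m (m s) - m s = 0 := by rw [h]; ring
      exact absurd h0 (unitSteps_ne_zero (hm2 _ hms))

lemma matching_ne {Q : Finset (ℤ × ℤ)} {m : ℤ × ℤ → ℤ × ℤ} (hm : IsMatching Q m)
    {s : ℤ × ℤ} (hs : s ∈ Q) : m s ≠ s := by
  intro h
  exact unitSteps_ne_zero (hm s hs).2.2 (by rw [h]; ring)

lemma matching_tiling {Q : Finset (ℤ × ℤ)} {m : ℤ × ℤ → ℤ × ℤ} (hm : IsMatching Q m) :
    IsDominoTiling Q (Q.image (fun s => ({s, m s} : Finset (ℤ × ℤ)))) := by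
  constructor
  · intro d hd
    obtain ⟨s, hs, rfl⟩ := Finset.mem_image.1 hd
    refine ⟨isDomino_pair (hm s hs).2.2, ?_⟩
    intro x hx
    rcases Finset.mem_insert.1 hx with rfl | hx
    · exact hs
    · rw [Finset.mem_singleton] at hx; subst hx; exact (hm s hs).1
  · intro s hs
    refine ⟨{s, m s}, ⟨Finset.mem_image_of_mem _ hs, by simp⟩, ?_⟩
    rintro d ⟨hd, hsd⟩
    obtain ⟨t, ht, rfl⟩ := Finset.mem_image.1 hd
    rcases Finset.mem_insert.1 hsd with rfl | hsd
    · rfl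
    · rw [Finset.mem_singleton] at hsd; subst hsd
      rw [(hm t ht).2.1, Finset.pair_comm]

def UniqTiled (Q : Finset (ℤ × ℤ)) : Prop :=
  ∃ T, IsDominoTiling Q T ∧ ∀ T', IsDominoTiling Q T' → T' = T

lemma matching_unique {Q : Finset (ℤ × ℤ)} {m m' : ℤ × ℤ → ℤ × ℤ}
    (hU : UniqTiled Q) (hm : IsMatching Q m) (hm' : IsMatching Q m')
    {s : ℤ × ℤ} (hs : s ∈ Q) : m' s = m s := by
  obtain ⟨T, -, huT⟩ := hU
  have e : Q.image (fun s => ({s, m' s} : Finset (ℤ × ℤ)))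
      = Q.image (fun s => ({s, m s} : Finset (ℤ × ℤ))) :=
    (huT _ (matching_tiling hm')).trans (huT _ (matching_tiling hm)).symm
  have h1 : ({s, m' s} : Finset (ℤ × ℤ)) ∈ Q.image (fun s => ({s, m s} : Finset (ℤ × ℤ))) := by
    rw [← e]; exact Finset.mem_image_of_mem _ hs
  have h2 : ({s, m s} : Finset (ℤ × ℤ)) ∈ Q.image (fun s => ({s, m s} : Finset (ℤ × ℤ))) :=
    Finset.mem_image_of_mem _ hs
  obtain ⟨d, -, huniq⟩ := (matching_tiling hm).2 s hs
  have e2 : ({s, m' s} : Finset (ℤ × ℤ)) = {s, m s} :=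
    (huniq _ ⟨h1, by simp⟩).trans (huniq _ ⟨h2, by simp⟩).symm
  have : m' s ∈ ({s, m s} : Finset (ℤ × ℤ)) := by rw [← e2]; simp
  rcases Finset.mem_insert.1 this with h | h
  · exact absurd h (matching_ne hm' hs)
  · exact Finset.mem_singleton.1 h

lemma tiling_extend {Q : Finset (ℤ × ℤ)} {T' : Finset (Finset (ℤ × ℤ))} {b w : ℤ × ℤ}
    (hb : b ∈ Q) (hw : w ∈ Q) (hadj : w - b ∈ unitSteps)
    (hT' : IsDominoTiling ((Q.erase b).erase w) T') :
    IsDominoTiling Q (insert {b, w} T') := by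
  have hbw : b ≠ w := fun h => unitSteps_ne_zero hadj (by rw [h]; ring)
  have hsq : ∀ d ∈ T', ∀ x ∈ d, x ∈ (Q.erase b).erase w := fun d hd => (hT'.1 d hd).2
  constructor
  · intro d hd
    rcases Finset.mem_insert.1 hd with rfl | hd
    · refine ⟨isDomino_pair hadj, ?_⟩
      intro x hx
      rcases Finset.mem_insert.1 hx with rfl | hx
      · exact hb
      · rw [Finset.mem_singleton] at hx; subst hx; exact hw
    · exact ⟨(hT'.1 d hd).1, fun x hx => Finset.mem_of_mem_erase (Finset.mem_of_mem_erase (hsq d hd x hx))⟩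
  · intro s hs
    by_cases hsbw : s = b ∨ s = w
    · refine ⟨{b, w}, ⟨Finset.mem_insert_self _ _, by rcases hsbw with rfl|rfl <;> simp⟩, ?_⟩
      rintro d ⟨hd, hsd⟩
      rcases Finset.mem_insert.1 hd with rfl | hd
      · rfl
      · exfalso
        have := hsq d hd s hsd
        rcases hsbw with rfl | rfl
        · exact (Finset.ne_of_mem_erase (Finset.mem_of_mem_erase this)) rfl
        · exact (Finset.ne_of_mem_erase this) rfl
    · push_neg at hsbw
      have hs2 : s ∈ (Q.erase b).erase w :=
        Finset.mem_erase.2 ⟨hsbw.2, Finset.mem_erase.2 ⟨hsbw.1, hs⟩⟩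
      obtain ⟨d, ⟨hd, hsd⟩, huniq⟩ := hT'.2 s hs2
      refine ⟨d, ⟨Finset.mem_insert_of_mem hd, hsd⟩, ?_⟩
      rintro d' ⟨hd', hsd'⟩
      rcases Finset.mem_insert.1 hd' with rfl | hd'
      · exfalso
        rcases Finset.mem_insert.1 hsd' with rfl | h
        · exact hsbw.1 rfl
        · exact hsbw.2 (Finset.mem_singleton.1 h)
      · exact huniq d' ⟨hd', hsd'⟩

lemma uniq_sub {Q : Finset (ℤ × ℤ)} {m : ℤ × ℤ → ℤ × ℤ}
    (hU : UniqTiled Q) (hm : IsMatching Q m) {b : ℤ × ℤ} (hb : b ∈ Q) :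
    UniqTiled ((Q.erase b).erase (m b)) := by
  set w := m b with hwdef
  set Q₂ := (Q.erase b).erase w with hQ₂
  have hw : w ∈ Q := (hm b hb).1
  have hwb : m w = b := (hm b hb).2.1
  have hadj : w - b ∈ unitSteps := (hm b hb).2.2
  have hbw : b ≠ w := fun h => unitSteps_ne_zero hadj (by rw [← h]; ring)
  -- m is a matching of Q₂
  have hm2 : IsMatching Q₂ m := by
    intro s hs
    have hsQ : s ∈ Q := Finset.mem_of_mem_erase (Finset.mem_of_mem_erase hs)
    have hsb : s ≠ b := Finset.ne_of_mem_erase (Finset.mem_of_mem_erase hs)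
    have hsw : s ≠ w := Finset.ne_of_mem_erase hs
    refine ⟨?_, (hm s hsQ).2.1, (hm s hsQ).2.2⟩
    have hmsQ : m s ∈ Q := (hm s hsQ).1
    have h1 : m s ≠ b := fun h => hsw (by rw [← (hm s hsQ).2.1, h, ← hwdef])
    have h2 : m s ≠ w := fun h => hsb (by rw [← (hm s hsQ).2.1, h, hwb])
    exact Finset.mem_erase.2 ⟨h2, Finset.mem_erase.2 ⟨h1, hmsQ⟩⟩
  refine ⟨Q₂.image (fun s => ({s, m s} : Finset (ℤ × ℤ))), matching_tiling hm2, ?_⟩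
  intro T' hT'
  obtain ⟨T, hT, huT⟩ := hU
  have hbwnot : ∀ (T'' : Finset (Finset (ℤ × ℤ))), IsDominoTiling Q₂ T'' →
      ({b, w} : Finset (ℤ × ℤ)) ∉ T'' := by
    intro T'' hT'' hmem
    have := (hT''.1 _ hmem).2 b (by simp)
    exact (Finset.ne_of_mem_erase (Finset.mem_of_mem_erase this)) rfl
  have e1 := huT _ (tiling_extend hb hw hadj hT')
  have e2 := huT _ (tiling_extend hb hw hadj (matching_tiling hm2))
  have e : insert ({b, w} : Finset (ℤ × ℤ)) T'
      = insert ({b, w} : Finset (ℤ × ℤ)) (Q₂.image (fun s => ({s, m s} : Finset (ℤ × ℤ)))) :=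
    e1.trans e2.symm
  ext d
  constructor
  · intro hd
    have : d ∈ insert ({b, w} : Finset (ℤ × ℤ)) (Q₂.image (fun s => ({s, m s} : Finset (ℤ × ℤ)))) := by
      rw [← e]; exact Finset.mem_insert_of_mem hd
    rcases Finset.mem_insert.1 this with rfl | h
    · exact absurd hd (hbwnot _ hT')
    · exact h
  · intro hd
    have : d ∈ insert ({b, w} : Finset (ℤ × ℤ)) T' := by
      rw [e]; exact Finset.mem_insert_of_mem hd
    rcases Finset.mem_insert.1 this with rfl | h
    · exact absurd hd (hbwnot _ (matching_tiling hm2))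
    · exact h

lemma exists_pendant {Q : Finset (ℤ × ℤ)} {m : ℤ × ℤ → ℤ × ℤ}
    (hU : UniqTiled Q) (hm : IsMatching Q m) (hne : Q.Nonempty) :
    ∃ b, b ∈ Q ∧ ¬ Even (b.1 + b.2) ∧ ∀ x, x ∈ Q → x - b ∈ unitSteps → x = m b := by
  classical
  -- there is a black square
  obtain ⟨s₀, hs₀⟩ := hne
  have hblack : ∃ b₀, b₀ ∈ Q ∧ ¬ Even (b₀.1 + b₀.2) := by
    by_cases h : Even (s₀.1 + s₀.2)
    · refine ⟨m s₀, (hm s₀ hs₀).1, ?_⟩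
      have := parity_flip (hm s₀ hs₀).2.2
      tauto
    · exact ⟨s₀, hs₀, h⟩
  obtain ⟨b₀, hb₀Q, hb₀B⟩ := hblack
  by_contra hcon
  push_neg at hcon
  choose! w hw1 hw2 hw3 using hcon
  set step : ℤ × ℤ → ℤ × ℤ := fun b => m (w b) with hstepdef
  have hwprops : ∀ b, b ∈ Q → ¬ Even (b.1 + b.2) →
      w b ∈ Q ∧ Even ((w b).1 + (w b).2) ∧ w b - b ∈ unitSteps ∧ w b ≠ m b := by
    intro b hb hbB
    refine ⟨hw1 b hb hbB, ?_, hw2 b hb hbB, hw3 b hb hbB⟩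
    have := parity_flip (hw2 b hb hbB)
    tauto
  have hstepP : ∀ b, b ∈ Q → ¬ Even (b.1 + b.2) →
      step b ∈ Q ∧ ¬ Even ((step b).1 + (step b).2) := by
    intro b hb hbB
    obtain ⟨hwQ, hwW, hwadj, -⟩ := hwprops b hb hbB
    refine ⟨(hm _ hwQ).1, ?_⟩
    have := parity_flip (hm _ hwQ).2.2
    tauto
  have hiter0 : ∀ (c : ℤ × ℤ), c ∈ Q → ¬ Even (c.1 + c.2) → ∀ k,
      step^[k] c ∈ Q ∧ ¬ Even ((step^[k] c).1 + (step^[k] c).2) := by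
    intro c hc hcB k
    induction k with
    | zero => exact ⟨hc, hcB⟩
    | succ n ih =>
        rw [Function.iterate_succ_apply']
        exact hstepP _ ih.1 ih.2
  -- pigeonhole: find a cycle
  have hpigeon : ∃ i ∈ Finset.range (Q.card + 1), ∃ j ∈ Finset.range (Q.card + 1),
      i ≠ j ∧ step^[i] b₀ = step^[j] b₀ :=
    Finset.exists_ne_map_eq_of_card_lt_of_maps_to (t := Q) (by simp)
      (fun k _ => (hiter0 b₀ hb₀Q hb₀B k).1)
  obtain ⟨i, -, j, -, hij, hfij⟩ := hpigeon
  -- wlog i < j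
  have hcycle : ∃ (c₀ : ℤ × ℤ) (p : ℕ), c₀ ∈ Q ∧ ¬ Even (c₀.1 + c₀.2) ∧ 0 < p ∧
      step^[p] c₀ = c₀ := by
    rcases lt_or_gt_of_ne hij with h | h
    · refine ⟨step^[i] b₀, j - i, (hiter0 b₀ hb₀Q hb₀B i).1, (hiter0 b₀ hb₀Q hb₀B i).2,
        by omega, ?_⟩
      rw [← Function.iterate_add_apply]
      rw [Nat.sub_add_cancel (le_of_lt h)]
      exact hfij.symm
    · refine ⟨step^[j] b₀, i - j, (hiter0 b₀ hb₀Q hb₀B j).1, (hiter0 b₀ hb₀Q hb₀B j).2,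
        by omega, ?_⟩
      rw [← Function.iterate_add_apply]
      rw [Nat.sub_add_cancel (le_of_lt h)]
      exact hfij
  obtain ⟨c₀, p₁, hc₀Q, hc₀B, hp₁pos, hcyc₁⟩ := hcycle
  have hex : ∃ p, 0 < p ∧ step^[p] c₀ = c₀ := ⟨p₁, hp₁pos, hcyc₁⟩
  set p := Nat.find hex with hpdef
  obtain ⟨hppos, hpcyc⟩ := Nat.find_spec hex
  have hpmin : ∀ q, q < p → ¬ (0 < q ∧ step^[q] c₀ = c₀) := fun q hq => Nat.find_min hex hq
  set f : ℕ → ℤ × ℤ := fun k => step^[k] c₀ with hfdef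
  have hfP : ∀ k, f k ∈ Q ∧ ¬ Even ((f k).1 + (f k).2) := hiter0 c₀ hc₀Q hc₀B
  have hinj : ∀ k k', k < p → k' < p → f k = f k' → k = k' := by
    have key : ∀ k k', k < k' → k' < p → f k ≠ f k' := by
      intro k k' hkk' hk'p heq
      have h1 : f (p - k' + k) = c₀ := by
        have : step^[p - k'] (f k') = c₀ := by
          show step^[p - k'] (step^[k'] c₀) = c₀
          rw [← Function.iterate_add_apply, Nat.sub_add_cancel (le_of_lt hk'p)]
          exact hpcyc
        rw [← heq] at this
        show step^[p - k' + k] c₀ = c₀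
        rw [Function.iterate_add_apply]
        exact this
      exact hpmin (p - k' + k) (by omega) ⟨by omega, h1⟩
    intro k k' hk hk' heq
    rcases lt_trichotomy k k' with h | h | h
    · exact absurd heq (key k k' h hk')
    · exact h
    · exact absurd heq.symm (key k' k h hk)
  set C : Finset (ℤ × ℤ) := (Finset.range p).image f with hCdef
  have hf0 : f 0 = c₀ := rfl
  have hfp : f p = c₀ := hpcyc
  have hmemC : ∀ c, c ∈ C ↔ ∃ k, k < p ∧ f k = c := by
    intro c
    simp [hCdef, Finset.mem_image, Finset.mem_range]
  have hCQ : ∀ c ∈ C, c ∈ Q := by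
    intro c hc; obtain ⟨k, -, rfl⟩ := (hmemC c).1 hc; exact (hfP k).1
  have hCB : ∀ c ∈ C, ¬ Even (c.1 + c.2) := by
    intro c hc; obtain ⟨k, -, rfl⟩ := (hmemC c).1 hc; exact (hfP k).2
  have hstepC : ∀ c ∈ C, step c ∈ C := by
    intro c hc
    obtain ⟨k, hk, rfl⟩ := (hmemC c).1 hc
    have : step (f k) = f (k + 1) := (Function.iterate_succ_apply' step k c₀).symm
    rw [this]
    by_cases hkp : k + 1 = p
    · rw [hkp, hfp] at *
      exact (hmemC c₀).2 ⟨0, hppos, rfl⟩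
    · exact (hmemC _).2 ⟨k + 1, by omega, rfl⟩
  have hsurjC : ∀ c ∈ C, ∃ c' ∈ C, step c' = c := by
    intro c hc
    obtain ⟨k, hk, rfl⟩ := (hmemC c).1 hc
    rcases Nat.eq_zero_or_pos k with rfl | hk0
    · refine ⟨f (p - 1), (hmemC _).2 ⟨p - 1, by omega, rfl⟩, ?_⟩
      have : step (f (p - 1)) = f (p - 1 + 1) := (Function.iterate_succ_apply' step (p-1) c₀).symm
      rw [this, Nat.sub_add_cancel hppos, hfp, hf0]
    · refine ⟨f (k - 1), (hmemC _).2 ⟨k - 1, by omega, rfl⟩, ?_⟩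
      have : step (f (k - 1)) = f (k - 1 + 1) := (Function.iterate_succ_apply' step (k-1) c₀).symm
      rw [this, Nat.sub_add_cancel hk0]
  have hstepinj : ∀ c ∈ C, ∀ c' ∈ C, step c = step c' → c = c' := by
    intro c hc c' hc' heq
    obtain ⟨k, hk, rfl⟩ := (hmemC c).1 hc
    obtain ⟨k', hk', rfl⟩ := (hmemC c').1 hc'
    have e1 : step (f k) = f (k + 1) := (Function.iterate_succ_apply' step k c₀).symm
    have e2 : step (f k') = f (k' + 1) := (Function.iterate_succ_apply' step k' c₀).symm
    rw [e1, e2] at heq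
    by_cases h1 : k + 1 = p <;> by_cases h2 : k' + 1 = p
    · have hkk : k = k' := by omega
      rw [hkk]
    · exfalso
      rw [h1, hfp, ← hf0] at heq
      have := hinj 0 (k' + 1) hppos (by omega) heq
      omega
    · exfalso
      rw [h2, hfp, ← hf0] at heq
      have := hinj (k + 1) 0 (by omega) hppos heq
      omega
    · have := hinj (k + 1) (k' + 1) (by omega) (by omega) heq
      have : k = k' := by omega
      rw [this]
  -- injectivity of w on C
  have hwinjC : Set.InjOn w ↑C := by
    intro c hc c' hc' heq
    have : step c = step c' := by simp only [hstepdef, heq]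
    exact hstepinj c hc c' hc' this
  set W : Finset (ℤ × ℤ) := C.image w with hWdef
  have hWwhite : ∀ x ∈ W, Even (x.1 + x.2) := by
    intro x hx
    obtain ⟨c, hc, rfl⟩ := Finset.mem_image.1 hx
    exact (hwprops c (hCQ c hc) (hCB c hc)).2.1
  have hCWdisj : ∀ x, x ∈ C → x ∈ W → False := fun x h1 h2 => (hCB x h1) (hWwhite x h2)
  have hmCW : ∀ c ∈ C, m c ∈ W := by
    intro c hc
    obtain ⟨c', hc', rfl⟩ := hsurjC c hc
    have hwc' : w c' ∈ Q := (hwprops c' (hCQ c' hc') (hCB c' hc')).1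
    have : m (step c') = w c' := by
      show m (m (w c')) = w c'
      exact (hm _ hwc').2.1
    rw [this]
    exact Finset.mem_image_of_mem _ hc'
  set m' : ℤ × ℤ → ℤ × ℤ :=
    fun x => if x ∈ C then w x else if x ∈ W then Function.invFunOn w ↑C x else m x with hm'def
  have hm'C : ∀ c ∈ C, m' c = w c := by
    intro c hc; simp only [hm'def, if_pos hc]
  have hm'W : ∀ x ∈ W, m' x = Function.invFunOn w ↑C x := by
    intro x hx
    simp only [hm'def]
    rw [if_neg (fun h => hCWdisj x h hx), if_pos hx]
  have hm'else : ∀ x, x ∉ C → x ∉ W → m' x = m x := by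
    intro x h1 h2
    simp only [hm'def, if_neg h1, if_neg h2]
  have hm'match : IsMatching Q m' := by
    intro s hs
    by_cases hsC : s ∈ C
    · have hsB := hCB s hsC
      obtain ⟨hwQ, hwW, hwadj, -⟩ := hwprops s hs hsB
      rw [hm'C s hsC]
      refine ⟨hwQ, ?_, hwadj⟩
      have hwsW : w s ∈ W := Finset.mem_image_of_mem _ hsC
      rw [hm'W _ hwsW]
      exact hwinjC.leftInvOn_invFunOn hsC
    · by_cases hsW : s ∈ W
      · obtain ⟨c, hc, hwc⟩ := Finset.mem_image.1 hsW
        have hex2 : ∃ a ∈ (↑C : Set (ℤ × ℤ)), w a = s := ⟨c, hc, hwc⟩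
        have hcmem : Function.invFunOn w ↑C s ∈ (↑C : Set (ℤ × ℤ)) := Function.invFunOn_mem hex2
        have hceq : w (Function.invFunOn w ↑C s) = s := Function.invFunOn_eq hex2
        rw [hm'W s hsW]
        set c' := Function.invFunOn w ↑C s with hc'def
        have hc'C : c' ∈ C := hcmem
        refine ⟨hCQ c' hc'C, ?_, ?_⟩
        · rw [hm'C c' hc'C, hceq]
        · have : c' - s = -(s - c') := by ring
          rw [this, ← hceq]
          exact unitSteps_neg (hwprops c' (hCQ c' hc'C) (hCB c' hc'C)).2.2.1
      · rw [hm'else s hsC hsW]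
        have hmsQ : m s ∈ Q := (hm s hs).1
        have hmsC : m s ∉ C := by
          intro h
          have := hmCW (m s) h
          rw [(hm s hs).2.1] at this
          exact hsW this
        have hmsW : m s ∉ W := by
          intro h
          obtain ⟨c, hc, hwc⟩ := Finset.mem_image.1 h
          have hsc : step c = s := by
            show m (w c) = s
            rw [hwc]
            exact (hm s hs).2.1
          exact hsC (hsc ▸ hstepC c hc)
        rw [hm'else _ hmsC hmsW]
        exact ⟨hmsQ, (hm s hs).2.1, (hm s hs).2.2⟩
  -- contradiction
  have hc₀C : c₀ ∈ C := (hmemC c₀).2 ⟨0, hppos, rfl⟩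
  have := matching_unique hU hm hm'match (hCQ c₀ hc₀C)
  rw [hm'C c₀ hc₀C] at this
  exact (hwprops c₀ (hCQ c₀ hc₀C) (hCB c₀ hc₀C)).2.2.2 this

noncomputable def nbhd' (Q U : Finset (ℤ × ℤ)) : Finset (ℤ × ℤ) :=
  @Finset.filter _ (fun x => ∃ b ∈ U, x - b ∈ unitSteps) (Classical.decPred _) Q

lemma mem_nbhd' {Q U : Finset (ℤ × ℤ)} {x : ℤ × ℤ} :
    x ∈ nbhd' Q U ↔ x ∈ Q ∧ ∃ b ∈ U, x - b ∈ unitSteps := by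
  classical
  simp [nbhd']

lemma excess_list : ∀ (n : ℕ) (Q : Finset (ℤ × ℤ)), Q.card ≤ n → UniqTiled Q →
    ∃ l : List (ℤ × ℤ), l.Nodup ∧ l.toFinset = blackSquares Q ∧
      ∀ k, k ≤ l.length → (nbhd' Q (l.take k).toFinset).card ≤ k := by
  intro n
  induction n with
  | zero =>
      intro Q hQ _
      have hQe : Q = ∅ := Finset.card_eq_zero.1 (le_antisymm hQ (Nat.zero_le _))
      subst hQe
      refine ⟨[], List.nodup_nil, by simp [blackSquares], ?_⟩
      intro k hk
      simp only [List.length_nil, Nat.le_zero] at hk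
      subst hk
      simp [nbhd']
  | succ n ih =>
      intro Q hQ hU
      rcases Q.eq_empty_or_nonempty with rfl | hne
      · refine ⟨[], List.nodup_nil, by simp [blackSquares], ?_⟩
        intro k hk
        simp only [List.length_nil, Nat.le_zero] at hk
        subst hk
        simp [nbhd']
      · obtain ⟨T, hT, -⟩ := id hU
        obtain ⟨m, hm, -⟩ := tiling_matching hT
        obtain ⟨b, hbQ, hbB, hpend⟩ := exists_pendant hU hm hne
        set w := m b with hwdef
        have hwQ : w ∈ Q := (hm b hbQ).1
        have hwadj : w - b ∈ unitSteps := (hm b hbQ).2.2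
        have hbw : b ≠ w := fun h => unitSteps_ne_zero hwadj (by rw [← h]; ring)
        have hwW : Even (w.1 + w.2) := by
          have := parity_flip hwadj
          tauto
        set Q₂ := (Q.erase b).erase w with hQ₂def
        have hQ₂card : Q₂.card ≤ n := by
          have h1 : (Q.erase b).card = Q.card - 1 := Finset.card_erase_of_mem hbQ
          have h2 : Q₂.card ≤ (Q.erase b).card := Finset.card_erase_le
          have h3 : 1 ≤ Q.card := Finset.card_pos.2 hne
          omega
        have hU₂ : UniqTiled Q₂ := uniq_sub hU hm hbQ
        obtain ⟨l₂, hl₂nd, hl₂tf, hl₂bd⟩ := ih Q₂ hQ₂card hU₂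
        have hbQ₂ : b ∉ Q₂ := by
          intro h
          exact (Finset.ne_of_mem_erase (Finset.mem_of_mem_erase h)) rfl
        have hwQ₂ : w ∉ Q₂ := fun h => (Finset.ne_of_mem_erase h) rfl
        have hQ₂sub : Q₂ ⊆ Q := fun x hx =>
          Finset.mem_of_mem_erase (Finset.mem_of_mem_erase hx)
        have hbl₂ : b ∉ l₂ := by
          intro h
          have : b ∈ blackSquares Q₂ := hl₂tf ▸ List.mem_toFinset.2 h
          exact hbQ₂ (Finset.mem_filter.1 this).1
        have hblk : blackSquares Q = insert b (blackSquares Q₂) := by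
          ext x
          simp only [blackSquares, Finset.mem_filter, Finset.mem_insert, hQ₂def,
            Finset.mem_erase]
          constructor
          · rintro ⟨hxQ, hxB⟩
            by_cases hxb : x = b
            · exact Or.inl hxb
            · refine Or.inr ⟨⟨?_, hxb, hxQ⟩, hxB⟩
              intro hxw
              rw [hxw] at hxB
              exact hxB hwW
          · rintro (rfl | ⟨⟨-, -, hxQ⟩, hxB⟩)
            · exact ⟨hbQ, hbB⟩
            · exact ⟨hxQ, hxB⟩
        refine ⟨b :: l₂, List.nodup_cons.2 ⟨hbl₂, hl₂nd⟩, ?_, ?_⟩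
        · rw [List.toFinset_cons, hl₂tf, hblk]
        · intro k hk
          cases k with
          | zero => simp [nbhd']
          | succ j =>
              have hj : j ≤ l₂.length := by
                simpa using hk
              have htake : ((b :: l₂).take (j + 1)).toFinset
                  = insert b (l₂.take j).toFinset := by
                simp [List.take_cons]
              rw [htake]
              have hsub : nbhd' Q (insert b (l₂.take j).toFinset)
                  ⊆ insert w (nbhd' Q₂ (l₂.take j).toFinset) := by
                intro x hx
                obtain ⟨hxQ, b', hb', hadj⟩ := mem_nbhd'.1 hx
                rcases Finset.mem_insert.1 hb' with rfl | hb'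
                · have := hpend x hxQ hadj
                  rw [this]
                  exact Finset.mem_insert_self _ _
                · have hb'blk : b' ∈ blackSquares Q₂ := by
                    rw [← hl₂tf]
                    exact List.mem_toFinset.2 (List.mem_of_mem_take (List.mem_toFinset.1 hb'))
                  have hb'B : ¬ Even (b'.1 + b'.2) := (Finset.mem_filter.1 hb'blk).2
                  by_cases hxw : x = w
                  · rw [hxw]; exact Finset.mem_insert_self _ _
                  · by_cases hxb : x = b
                    · exfalso
                      subst hxb
                      have hadj' : b' - x ∈ unitSteps := by
                        have : b' - x = -(x - b') := by ring
                        rw [this]; exact unitSteps_neg hadj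
                      have := hpend b' (hQ₂sub (Finset.mem_filter.1 hb'blk).1) hadj'
                      rw [this] at hb'B
                      exact hb'B hwW
                    · apply Finset.mem_insert_of_mem
                      refine mem_nbhd'.2 ⟨?_, b', hb', hadj⟩
                      exact Finset.mem_erase.2 ⟨hxw, Finset.mem_erase.2 ⟨hxb, hxQ⟩⟩
              calc (nbhd' Q (insert b (l₂.take j).toFinset)).card
                  ≤ (insert w (nbhd' Q₂ (l₂.take j).toFinset)).card :=
                    Finset.card_le_card hsub
                _ ≤ (nbhd' Q₂ (l₂.take j).toFinset).card + 1 := Finset.card_insert_le _ _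
                _ ≤ j + 1 := by
                    have := hl₂bd j hj
                    omega

def whiteSquares' (R : Finset (ℤ × ℤ)) : Finset (ℤ × ℤ) :=
  R.filter fun s => Even (s.1 + s.2)

lemma black_white_card {Q : Finset (ℤ × ℤ)} {T : Finset (Finset (ℤ × ℤ))}
    (hT : IsDominoTiling Q T) : (blackSquares Q).card = (whiteSquares' Q).card := by
  obtain ⟨m, hm, -⟩ := tiling_matching hT
  refine Finset.card_bij (fun a _ => m a) ?_ ?_ ?_
  · intro a ha
    obtain ⟨haQ, haB⟩ := Finset.mem_filter.1 ha
    refine Finset.mem_filter.2 ⟨(hm a haQ).1, ?_⟩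
    have := parity_flip (hm a haQ).2.2
    tauto
  · intro a ha a' ha' heq
    have haQ := (Finset.mem_filter.1 ha).1
    have ha'Q := (Finset.mem_filter.1 ha').1
    have heq' : m a = m a' := heq
    rw [← (hm a haQ).2.1, ← (hm a' ha'Q).2.1, heq']
  · intro x hx
    obtain ⟨hxQ, hxW⟩ := Finset.mem_filter.1 hx
    have hmxQ : m x ∈ Q := (hm x hxQ).1
    have hmxB : ¬ Even ((m x).1 + (m x).2) := by
      have := parity_flip (hm x hxQ).2.2
      tauto
    exact ⟨m x, Finset.mem_filter.2 ⟨hmxQ, hmxB⟩, (hm x hxQ).2.1⟩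

lemma tiling_domino_disjoint {Q : Finset (ℤ × ℤ)} {T : Finset (Finset (ℤ × ℤ))}
    (hT : IsDominoTiling Q T) {d d' : Finset (ℤ × ℤ)} (hd : d ∈ T) (hd' : d' ∈ T)
    {x : ℤ × ℤ} (hx : x ∈ d) (hx' : x ∈ d') : d = d' := by
  have hxQ : x ∈ Q := (hT.1 d hd).2 x hx
  obtain ⟨e, -, huniq⟩ := hT.2 x hxQ
  exact (huniq d ⟨hd, hx⟩).trans (huniq d' ⟨hd', hx'⟩).symm

lemma pair_black_white {s t : ℤ × ℤ} (h : t - s ∈ unitSteps) :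
    (blackSquares {s, t}).card = 1 ∧ (whiteSquares' {s, t}).card = 1 := by
  have hst : s ≠ t := fun hh => unitSteps_ne_zero h (by rw [hh]; ring)
  have hpar := parity_flip h
  by_cases hs : Even (s.1 + s.2)
  · have ht : ¬ Even (t.1 + t.2) := by tauto
    have hb : blackSquares {s, t} = {t} := by
      ext x
      simp only [blackSquares, Finset.mem_filter, Finset.mem_insert, Finset.mem_singleton]
      constructor
      · rintro ⟨rfl | rfl, hx⟩
        · exact absurd hs hx
        · rfl
      · rintro rfl
        exact ⟨Or.inr rfl, ht⟩
    have hw : whiteSquares' {s, t} = {s} := by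
      ext x
      simp only [whiteSquares', Finset.mem_filter, Finset.mem_insert, Finset.mem_singleton]
      constructor
      · rintro ⟨rfl | rfl, hx⟩
        · rfl
        · exact absurd hx ht
      · rintro rfl
        exact ⟨Or.inl rfl, hs⟩
    rw [hb, hw]; simp
  · have ht : Even (t.1 + t.2) := by tauto
    have hb : blackSquares {s, t} = {s} := by
      ext x
      simp only [blackSquares, Finset.mem_filter, Finset.mem_insert, Finset.mem_singleton]
      constructor
      · rintro ⟨rfl | rfl, hx⟩
        · rfl
        · exact absurd ht hx
      · rintro rfl
        exact ⟨Or.inl rfl, hs⟩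
    have hw : whiteSquares' {s, t} = {t} := by
      ext x
      simp only [whiteSquares', Finset.mem_filter, Finset.mem_insert, Finset.mem_singleton]
      constructor
      · rintro ⟨rfl | rfl, hx⟩
        · exact absurd hx hs
        · rfl
      · rintro rfl
        exact ⟨Or.inr rfl, ht⟩
    rw [hb, hw]; simp

lemma domino_black_white {d : Finset (ℤ × ℤ)} (hd : IsDomino d) :
    (blackSquares d).card = 1 ∧ (whiteSquares' d).card = 1 := by
  obtain ⟨s, t, rfl, hst⟩ := hd
  apply pair_black_white
  rcases hst with h | h <;> rw [h] <;> simp [mem_unitSteps_iff]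

lemma biUnion_black_card {Q : Finset (ℤ × ℤ)} {T S : Finset (Finset (ℤ × ℤ))}
    (hT : IsDominoTiling Q T) (hS : S ⊆ T) :
    (blackSquares (S.biUnion id)).card = S.card
      ∧ (whiteSquares' (S.biUnion id)).card = S.card := by
  classical
  have hdisj : ∀ d ∈ S, ∀ d' ∈ S, d ≠ d' → Disjoint d d' := by
    intro d hd d' hd' hne
    rw [Finset.disjoint_left]
    intro x hx hx'
    exact hne (tiling_domino_disjoint hT (hS hd) (hS hd') hx hx')
  constructor
  · have e : blackSquares (S.biUnion id) = S.biUnion (fun d => blackSquares d) := by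
      ext x
      simp [blackSquares, Finset.mem_biUnion]
      tauto
    rw [e, Finset.card_biUnion]
    · rw [Finset.sum_congr rfl (fun d hd => (domino_black_white (hT.1 d (hS hd)).1).1)]
      simp
    · intro d hd d' hd' hne
      exact Finset.disjoint_filter_filter (hdisj d hd d' hd' hne)
  · have e : whiteSquares' (S.biUnion id) = S.biUnion (fun d => whiteSquares' d) := by
      ext x
      simp [whiteSquares', Finset.mem_biUnion]
      tauto
    rw [e, Finset.card_biUnion]
    · rw [Finset.sum_congr rfl (fun d hd => (domino_black_white (hT.1 d (hS hd)).1).2)]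
      simp
    · intro d hd d' hd' hne
      exact Finset.disjoint_filter_filter (hdisj d hd d' hd' hne)


lemma tiling_superset_eq {R : Finset (ℤ × ℤ)} {T T' : Finset (Finset (ℤ × ℤ))}
    (hT : IsDominoTiling R T) (hT' : IsDominoTiling R T') (hsub : T ⊆ T') : T' = T := by
  ext d
  refine ⟨fun hd => ?_, fun hd => hsub hd⟩
  obtain ⟨a, c, rfl, -⟩ := (hT'.1 d hd).1
  have haR : a ∈ R := (hT'.1 _ hd).2 a (by simp)
  obtain ⟨d₀, ⟨hd₀T, hd₀a⟩, -⟩ := hT.2 a haR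
  obtain ⟨d₁, -, huniq⟩ := hT'.2 a haR
  have e1 := huniq _ ⟨hd, by simp⟩
  have e2 := huniq _ ⟨hsub hd₀T, hd₀a⟩
  rw [e1.trans e2.symm]
  exact hd₀T

lemma forcing_attained {R : Finset (ℤ × ℤ)} (htile : ∃ T, IsDominoTiling R T) :
    ∃ T S, IsDominoTiling R T ∧ IsForcingSet R T S ∧ S.card = forcingNumber R := by
  obtain ⟨T, hT⟩ := htile
  have hne : {n | ∃ T S, IsDominoTiling R T ∧ IsForcingSet R T S ∧ S.card = n}.Nonempty :=
    ⟨T.card, T, T, hT, ⟨Finset.Subset.refl T, fun T' h1 h2 => tiling_superset_eq hT h1 h2⟩, rfl⟩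
  exact Nat.sInf_mem hne

lemma mem_nbhdSq {R U : Finset (ℤ × ℤ)} {x : ℤ × ℤ} :
    x ∈ nbhdSq R U ↔ x ∈ R ∧ Even (x.1 + x.2) ∧ ∃ b ∈ U, x - b ∈ unitSteps := by
  classical
  simp [nbhdSq]

lemma residual_tiling {R : Finset (ℤ × ℤ)} {T S : Finset (Finset (ℤ × ℤ))}
    (hT : IsDominoTiling R T) (hsub : S ⊆ T) :
    IsDominoTiling (R \ S.biUnion id) (T \ S) := by
  classical
  constructor
  · intro d hd
    obtain ⟨hdT, hdS⟩ := Finset.mem_sdiff.1 hd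
    refine ⟨(hT.1 d hdT).1, ?_⟩
    intro x hx
    refine Finset.mem_sdiff.2 ⟨(hT.1 d hdT).2 x hx, ?_⟩
    intro hxDS
    obtain ⟨d', hd'S, hxd'⟩ := Finset.mem_biUnion.1 hxDS
    exact hdS ((tiling_domino_disjoint hT hdT (hsub hd'S) hx hxd') ▸ hd'S)
  · intro x hx
    obtain ⟨hxR, hxDS⟩ := Finset.mem_sdiff.1 hx
    obtain ⟨d, ⟨hdT, hxd⟩, huniq⟩ := hT.2 x hxR
    have hdS : d ∉ S := fun h => hxDS (Finset.mem_biUnion.2 ⟨d, h, hxd⟩)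
    refine ⟨d, ⟨Finset.mem_sdiff.2 ⟨hdT, hdS⟩, hxd⟩, ?_⟩
    rintro d' ⟨hd', hxd'⟩
    exact huniq d' ⟨(Finset.mem_sdiff.1 hd').1, hxd'⟩

lemma residual_uniq {R : Finset (ℤ × ℤ)} {T S : Finset (Finset (ℤ × ℤ))}
    (hT : IsDominoTiling R T) (hS : IsForcingSet R T S) :
    UniqTiled (R \ S.biUnion id) := by
  classical
  set DS := S.biUnion id with hDS
  refine ⟨T \ S, residual_tiling hT hS.1, ?_⟩
  intro T₂ hT₂
  have hunion : IsDominoTiling R (T₂ ∪ S) := by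
    constructor
    · intro d hd
      rcases Finset.mem_union.1 hd with hd | hd
      · exact ⟨(hT₂.1 d hd).1, fun x hx => (Finset.mem_sdiff.1 ((hT₂.1 d hd).2 x hx)).1⟩
      · exact hT.1 d (hS.1 hd)
    · intro x hxR
      by_cases hxDS : x ∈ DS
      · obtain ⟨d', hd'S, hxd'⟩ := Finset.mem_biUnion.1 hxDS
        refine ⟨d', ⟨Finset.mem_union_right _ hd'S, hxd'⟩, ?_⟩
        rintro d ⟨hd, hxd⟩
        rcases Finset.mem_union.1 hd with hd | hd
        · exact absurd hxDS (Finset.mem_sdiff.1 ((hT₂.1 d hd).2 x hxd)).2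
        · exact tiling_domino_disjoint hT (hS.1 hd) (hS.1 hd'S) hxd hxd'
      · have hxQ : x ∈ R \ DS := Finset.mem_sdiff.2 ⟨hxR, hxDS⟩
        obtain ⟨d₂, ⟨hd₂, hxd₂⟩, huniq⟩ := hT₂.2 x hxQ
        refine ⟨d₂, ⟨Finset.mem_union_left _ hd₂, hxd₂⟩, ?_⟩
        rintro d ⟨hd, hxd⟩
        rcases Finset.mem_union.1 hd with hd | hd
        · exact huniq d ⟨hd, hxd⟩
        · exact absurd (Finset.mem_biUnion.2 ⟨d, hd, hxd⟩) hxDS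
  have he : T₂ ∪ S = T := hS.2 _ hunion (Finset.subset_union_right)
  ext d
  constructor
  · intro hd
    refine Finset.mem_sdiff.2 ⟨?_, ?_⟩
    · rw [← he]; exact Finset.mem_union_left _ hd
    · intro hdS
      obtain ⟨a, c, hdef, -⟩ := (hT₂.1 d hd).1
      have haQ : a ∈ R \ DS := (hT₂.1 d hd).2 a (by rw [hdef]; simp)
      have haDS : a ∈ DS := Finset.mem_biUnion.2 ⟨d, hdS, by rw [hdef]; simp⟩
      exact (Finset.mem_sdiff.1 haQ).2 haDS
  · intro hd
    obtain ⟨hdT, hdS⟩ := Finset.mem_sdiff.1 hd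
    rw [← he] at hdT
    rcases Finset.mem_union.1 hdT with h | h
    · exact h
    · exact absurd h hdS


end Helpers

/-- Riddle. The forcing number is bounded below by the minimum
maximum excess. -/
theorem minMaxExcess_le_forcingNumber
    (R : Finset (ℤ × ℤ)) (hne : R.Nonempty)
    (htile : ∃ T, IsDominoTiling R T) :
    minMaxExcess R ≤ (forcingNumber R : ℤ) := by
  classical
  obtain ⟨T, S, hT, hS, hcard⟩ := forcing_attained htile
  set DS := S.biUnion id with hDSdef
  set Q := R \ DS with hQdef
  have hDSsubR : DS ⊆ R := by
    intro x hx
    obtain ⟨d, hdS, hxd⟩ := Finset.mem_biUnion.1 hx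
    exact (hT.1 d (hS.1 hdS)).2 x hxd
  have hUQ : UniqTiled Q := residual_uniq hT hS
  obtain ⟨lQ, hlQnd, hlQtf, hlQbd⟩ := excess_list Q.card Q le_rfl hUQ
  have hlQlen : lQ.length = (blackSquares Q).card := by
    rw [← hlQtf, List.toFinset_card_of_nodup hlQnd]
  set r := lQ.length with hrdef
  have hbw := black_white_card hT
  have hDScount := biUnion_black_card hT hS.1
  -- split of blacks
  have hdisjblk : Disjoint (blackSquares Q) (blackSquares DS) := by
    rw [Finset.disjoint_left]
    intro x hx hx'
    exact (Finset.mem_sdiff.1 (Finset.mem_filter.1 hx).1).2 (Finset.mem_filter.1 hx').1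
  have hunionblk : blackSquares R = blackSquares Q ∪ blackSquares DS := by
    ext x
    simp only [blackSquares, Finset.mem_filter, Finset.mem_union, hQdef, Finset.mem_sdiff]
    constructor
    · rintro ⟨hxR, hxB⟩
      by_cases h : x ∈ DS
      · exact Or.inr ⟨h, hxB⟩
      · exact Or.inl ⟨⟨hxR, h⟩, hxB⟩
    · rintro (⟨⟨hxR, -⟩, hxB⟩ | ⟨hxDS, hxB⟩)
      · exact ⟨hxR, hxB⟩
      · exact ⟨hDSsubR hxDS, hxB⟩
  have hsplit : (blackSquares R).card = r + S.card := by
    rw [hunionblk, Finset.card_union_of_disjoint hdisjblk, ← hlQlen, hDScount.1]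
  have hwhiteR : (whiteSquares' R).card = r + S.card := by
    rw [← hbw, hsplit]
  -- blacks nonempty
  have hblkne : (blackSquares R).Nonempty := by
    obtain ⟨s₀, hs₀⟩ := hne
    obtain ⟨m, hm, -⟩ := tiling_matching hT
    by_cases h : Even (s₀.1 + s₀.2)
    · refine ⟨m s₀, Finset.mem_filter.2 ⟨(hm s₀ hs₀).1, ?_⟩⟩
      have := parity_flip (hm s₀ hs₀).2.2
      tauto
    · exact ⟨s₀, Finset.mem_filter.2 ⟨hs₀, h⟩⟩
  set lDS := (blackSquares DS).toList with hlDSdef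
  set l := lQ ++ lDS with hldef
  have hlnd : l.Nodup := by
    refine List.Nodup.append hlQnd (Finset.nodup_toList _) ?_
    intro a ha ha'
    have h1 : a ∈ blackSquares Q := hlQtf ▸ List.mem_toFinset.2 ha
    have h2 : a ∈ blackSquares DS := by
      rw [← Finset.mem_toList]
      exact ha'
    exact Finset.disjoint_left.1 hdisjblk h1 h2
  have hltf : l.toFinset = blackSquares R := by
    rw [hldef, List.toFinset_append, hlQtf, Finset.toList_toFinset, hunionblk]
  have hllen : l.length = (blackSquares R).card := by
    rw [← hltf, List.toFinset_card_of_nodup hlnd]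
  have h1len : 1 ≤ l.length := by
    rw [hllen]
    exact Finset.card_pos.2 hblkne
  -- the key bound
  have hkey : ∀ k, 1 ≤ k → k ≤ l.length → excess R ((l.take k).toFinset) ≤ (S.card : ℤ) := by
    intro k hk1 hk2
    have htknd : (l.take k).Nodup := List.Nodup.sublist (List.take_sublist _ _) hlnd
    have hUcard : ((l.take k).toFinset).card = k := by
      rw [List.toFinset_card_of_nodup htknd, List.length_take]
      omega
    have hNnat : (nbhdSq R ((l.take k).toFinset)).card + 0 ≥ 0 := Nat.zero_le _
    show ((nbhdSq R ((l.take k).toFinset)).card : ℤ) - ((l.take k).toFinset).card ≤ (S.card : ℤ)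
    rw [hUcard]
    by_cases hkr : k ≤ r
    · have htake : l.take k = lQ.take k := List.take_append_of_le_length hkr
      have hNsub : nbhdSq R ((l.take k).toFinset)
          ⊆ nbhd' Q ((lQ.take k).toFinset) ∪ whiteSquares' DS := by
        intro x hx
        obtain ⟨hxR, hxE, b, hb, hadj⟩ := mem_nbhdSq.1 hx
        rw [htake] at hb
        by_cases hxDS : x ∈ DS
        · exact Finset.mem_union_right _ (Finset.mem_filter.2 ⟨hxDS, hxE⟩)
        · exact Finset.mem_union_left _
            (mem_nbhd'.2 ⟨Finset.mem_sdiff.2 ⟨hxR, hxDS⟩, b, hb, hadj⟩)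
      have hNcard : (nbhdSq R ((l.take k).toFinset)).card ≤ k + S.card := by
        calc (nbhdSq R ((l.take k).toFinset)).card
            ≤ (nbhd' Q ((lQ.take k).toFinset) ∪ whiteSquares' DS).card :=
              Finset.card_le_card hNsub
          _ ≤ (nbhd' Q ((lQ.take k).toFinset)).card + (whiteSquares' DS).card :=
              Finset.card_union_le _ _
          _ ≤ k + S.card := by
              have := hlQbd k hkr
              rw [hDScount.2]
              omega
      omega
    · have hNsub : nbhdSq R ((l.take k).toFinset) ⊆ whiteSquares' R := by
        intro x hx
        obtain ⟨hxR, hxE, -⟩ := mem_nbhdSq.1 hx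
        exact Finset.mem_filter.2 ⟨hxR, hxE⟩
      have hNcard : (nbhdSq R ((l.take k).toFinset)).card ≤ r + S.card := by
        calc (nbhdSq R ((l.take k).toFinset)).card
            ≤ (whiteSquares' R).card := Finset.card_le_card hNsub
          _ = r + S.card := hwhiteR
      omega
  -- maxExcess bound
  have hmax : maxExcess R l ≤ (S.card : ℤ) := by
    unfold maxExcess
    apply csSup_le
    · exact ⟨excess R ((l.take 1).toFinset), 1, le_rfl, h1len, rfl⟩
    · rintro z ⟨k, hk1, hk2, rfl⟩
      exact hkey k hk1 hk2
  -- lower bound for all maxExcess values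
  have hbdd : BddBelow {z : ℤ | ∃ l' : List (ℤ × ℤ), l'.Nodup ∧ l'.toFinset = blackSquares R ∧
      z = maxExcess R l'} := by
    refine ⟨-1, ?_⟩
    rintro z ⟨l', hnd', htf', rfl⟩
    have hlen' : 1 ≤ l'.length := by
      rw [← List.toFinset_card_of_nodup hnd', htf']
      exact Finset.card_pos.2 hblkne
    have hBddA : BddAbove {z : ℤ | ∃ k, 1 ≤ k ∧ k ≤ l'.length ∧
        z = excess R ((l'.take k).toFinset)} := by
      refine ⟨(R.card : ℤ), ?_⟩
      rintro z ⟨k, -, -, rfl⟩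
      show ((nbhdSq R ((l'.take k).toFinset)).card : ℤ)
          - ((l'.take k).toFinset).card ≤ (R.card : ℤ)
      have hsubR : nbhdSq R ((l'.take k).toFinset) ⊆ R := fun x hx => (mem_nbhdSq.1 hx).1
      have h1 : (nbhdSq R ((l'.take k).toFinset)).card ≤ R.card :=
        Finset.card_le_card hsubR
      omega
    have hmem1 : excess R ((l'.take 1).toFinset) ∈ {z : ℤ | ∃ k, 1 ≤ k ∧ k ≤ l'.length ∧
        z = excess R ((l'.take k).toFinset)} := ⟨1, le_rfl, hlen', rfl⟩
    have h2 : (-1 : ℤ) ≤ excess R ((l'.take 1).toFinset) := by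
      show (-1 : ℤ) ≤ ((nbhdSq R ((l'.take 1).toFinset)).card : ℤ)
          - ((l'.take 1).toFinset).card
      have hU1 : ((l'.take 1).toFinset).card ≤ 1 := by
        calc ((l'.take 1).toFinset).card ≤ (l'.take 1).length := List.toFinset_card_le _
          _ ≤ 1 := by rw [List.length_take]; omega
      omega
    calc (-1 : ℤ) ≤ excess R ((l'.take 1).toFinset) := h2
      _ ≤ maxExcess R l' := by
          unfold maxExcess
          exact le_csSup hBddA hmem1
  have hmemL : maxExcess R l ∈ {z : ℤ | ∃ l' : List (ℤ × ℤ), l'.Nodup ∧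
      l'.toFinset = blackSquares R ∧ z = maxExcess R l'} := ⟨l, hlnd, hltf, rfl⟩
  calc minMaxExcess R ≤ maxExcess R l := csInf_le hbdd hmemL
    _ ≤ (S.card : ℤ) := hmax
    _ = (forcingNumber R : ℤ) := by exact_mod_cast hcard
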